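/- Let p be a prime, χ a nontrivial (hence primitive) Dirichlet character modulo p, q a positive integer with p ∤ q, a an integer with gcd(a, q) = 1, and m an integer. Then Σ_{u=0}^{pq−1} χ(u) · e(−a·u/q + m·u/(pq)) equals q · τ(χ) · χ(q) · \overline{χ}(m) if q divides m − a·p, and equals 0 otherwise. -/

import Mathlib

open Finset

/-- `e(x) = exp(2πi x)`. -/
noncomputable def e (x : ℝ) : ℂ := Complex.exp (2 * Real.pi * Complex.I * x)

lemma e_add (x y : ℝ) : e (x + y) = e x * e y := by
  rw [e, e, e, ← Complex.exp_add]
  congr 1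
  push_cast
  ring

lemma e_int (n : ℤ) : e n = 1 := by
  rw [e]
  push_cast
  rw [mul_comm, Complex.exp_int_mul, Complex.exp_two_pi_mul_I, one_zpow]

lemma e_nat_mul (n : ℕ) (x : ℝ) : e (n * x) = e x ^ n := by
  rw [e, e, ← Complex.exp_nat_mul]
  congr 1
  push_cast
  ring

lemma sum_e_eq (q : ℕ) (hq : 0 < q) (k : ℤ) :
    ∑ t ∈ range q, e (t * k / q) = if (q : ℤ) ∣ k then (q : ℂ) else 0 := by
  have hq0 : (q : ℝ) ≠ 0 := Nat.cast_ne_zero.mpr hq.ne'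
  split_ifs with h
  · obtain ⟨c, rfl⟩ := h
    have h1 : ∀ t ∈ range q, e ((t : ℝ) * (((q : ℤ) * c : ℤ) : ℝ) / q) = 1 := by
      intro t _
      have harg : (t : ℝ) * (((q : ℤ) * c : ℤ) : ℝ) / q = ((t * c : ℤ) : ℝ) := by
        field_simp
        push_cast
        ring
      rw [harg, e_int]
    rw [Finset.sum_congr rfl (fun t ht => by rw [h1 t ht])]
    simp
  · have hζ : e ((k : ℝ) / q) ≠ 1 := by
      intro hcon
      apply h
      rw [e, Complex.exp_eq_one_iff] at hcon
      obtain ⟨n, hn⟩ := hcon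
      have h2 : (2 * (Real.pi : ℂ) * Complex.I) ≠ 0 := by
        simp [Real.pi_ne_zero, Complex.I_ne_zero]
      have h3 : (((k : ℝ) / q : ℝ) : ℂ) = (n : ℂ) := by
        have : 2 * (Real.pi : ℂ) * Complex.I * (((k : ℝ) / q : ℝ) : ℂ)
            = 2 * (Real.pi : ℂ) * Complex.I * (n : ℂ) := by rw [hn]; ring
        exact mul_left_cancel₀ h2 this
      have h4 : (k : ℝ) / q = (n : ℝ) := by exact_mod_cast h3
      have h5 : (k : ℝ) = (q : ℝ) * n := by field_simp at h4; linarith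
      exact ⟨n, by exact_mod_cast h5⟩
    have h1 : ∀ t ∈ range q, e ((t : ℝ) * (k : ℝ) / q) = e ((k : ℝ) / q) ^ t := by
      intro t _
      rw [← e_nat_mul]
      congr 1
      ring
    rw [Finset.sum_congr rfl h1, geom_sum_eq hζ]
    have hq1 : e ((k : ℝ) / q) ^ q = 1 := by
      rw [← e_nat_mul]
      have : (q : ℝ) * ((k : ℝ) / q) = ((k : ℤ) : ℝ) := by field_simp
      rw [this, e_int]
    rw [hq1, sub_self, zero_div]

lemma e_zmod_val (p : ℕ) [NeZero p] (n : ℤ) :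
    e ((((n : ZMod p).val : ℕ) : ℝ) / p) = e ((n : ℝ) / p) := by
  have hp0 : (p : ℝ) ≠ 0 := Nat.cast_ne_zero.mpr (NeZero.ne p)
  have h : ((((n : ZMod p).val : ℤ)) : ZMod p) = (n : ZMod p) := by
    push_cast
    simp [ZMod.natCast_val, ZMod.cast_id]
  have hd : (p : ℤ) ∣ n - ((n : ZMod p).val : ℤ) := by
    rw [← ZMod.intCast_zmod_eq_zero_iff_dvd]
    push_cast
    rw [sub_eq_zero]
    exact_mod_cast h.symm
  obtain ⟨c, hc⟩ := hd
  have h6 : (n : ℝ) = (((n : ZMod p).val : ℕ) : ℝ) + (p : ℝ) * (c : ℝ) := by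
    have h7 : n = ((n : ZMod p).val : ℤ) + p * c := by linarith [hc]
    exact_mod_cast h7
  have harg : (n : ℝ) / p = (((n : ZMod p).val : ℕ) : ℝ) / p + (c : ℝ) := by
    rw [h6]; field_simp
  rw [harg, e_add, e_int, mul_one]

lemma sum_range_zmod (p : ℕ) [NeZero p] (f : ZMod p → ℂ) :
    ∑ s ∈ range p, f (s : ZMod p) = ∑ x : ZMod p, f x := by
  exact Finset.sum_nbij' (fun s => (s : ZMod p)) (fun x => x.val)
    (fun a _ => mem_univ _) (fun x _ => mem_range.mpr (ZMod.val_lt x))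
    (fun s hs => ZMod.val_cast_of_lt (mem_range.mp hs))
    (fun x _ => ZMod.natCast_rightInverse x) (fun s _ => rfl)

lemma conj_char_mul (p : ℕ) [hFp : Fact p.Prime] (χ : DirichletCharacter ℂ p) (x : ZMod p)
    (hx : x ≠ 0) : (starRingEnd ℂ) (χ x) * χ x = 1 := by
  have hpow : χ x ^ (p - 1) = 1 := by
    rw [← map_pow, ZMod.pow_card_sub_one_eq_one hx, map_one]
  have hnorm : ‖χ x‖ = 1 :=
    Complex.norm_eq_one_of_pow_eq_one hpow (by have := hFp.out.two_le; omega)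
  have h1 : χ x * (starRingEnd ℂ) (χ x) = ((Complex.normSq (χ x) : ℝ) : ℂ) :=
    Complex.mul_conj (χ x)
  rw [mul_comm] at h1
  rw [h1]
  rw [Complex.normSq_eq_norm_sq, hnorm]
  norm_num

lemma char_shift (p : ℕ) (hp : p.Prime) (χ : DirichletCharacter ℂ p) (hχ : χ ≠ 1) (b : ℤ) :
    ∑ s ∈ range p, χ (s : ZMod p) * e ((s : ℝ) * (b : ℝ) / p) =
      (starRingEnd ℂ) (χ (b : ZMod p)) * ∑ s ∈ range p, χ (s : ZMod p) * e ((s : ℝ) / p) := by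
  haveI : Fact p.Prime := ⟨hp⟩
  have hp0 : (p : ℝ) ≠ 0 := Nat.cast_ne_zero.mpr hp.pos.ne'
  by_cases hb : ((b : ZMod p)) = 0
  · have hd : (p : ℤ) ∣ b := (ZMod.intCast_zmod_eq_zero_iff_dvd b p).mp hb
    obtain ⟨c, rfl⟩ := hd
    have h1 : ∀ s ∈ range p, χ (s : ZMod p) * e ((s : ℝ) * (((p : ℤ) * c : ℤ) : ℝ) / p)
        = χ (s : ZMod p) := by
      intro s _
      have harg : (s : ℝ) * (((p : ℤ) * c : ℤ) : ℝ) / p = ((s * c : ℤ) : ℝ) := by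
        field_simp
        push_cast
        ring
      rw [harg, e_int, mul_one]
    rw [Finset.sum_congr rfl h1, hb, sum_range_zmod p (fun x => χ x),
      MulChar.sum_eq_zero_of_ne_one hχ]
    rw [χ.map_nonunit not_isUnit_zero, map_zero, zero_mul]
  · set β : ZMod p := (b : ZMod p) with hβ
    have hconj : (starRingEnd ℂ) (χ β) * χ β = 1 := conj_char_mul p χ β hb
    have hβinv : β⁻¹ * β = 1 := inv_mul_cancel₀ hb
    have step1 : ∑ s ∈ range p, χ (s : ZMod p) * e ((s : ℝ) * (b : ℝ) / p)
        = ∑ x : ZMod p, χ x * e ((((x * β).val : ℕ) : ℝ) / p) := by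
      rw [← sum_range_zmod p (fun x => χ x * e ((((x * β).val : ℕ) : ℝ) / p))]
      refine Finset.sum_congr rfl (fun s _ => ?_)
      congr 1
      have h2 : ((s : ZMod p) * β) = (((s * b : ℤ) : ZMod p)) := by push_cast; ring
      rw [h2, e_zmod_val p ((s : ℤ) * b)]
      congr 1
      push_cast
      ring
    have step2 : ∑ x : ZMod p, χ x * e ((((x * β).val : ℕ) : ℝ) / p)
        = ∑ y : ZMod p, χ (y * β⁻¹) * e (((y.val : ℕ) : ℝ) / p) := by
      apply Fintype.sum_equiv (Equiv.mulRight₀ β hb)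
        (fun x => χ x * e ((((x * β).val : ℕ) : ℝ) / p))
        (fun y => χ (y * β⁻¹) * e (((y.val : ℕ) : ℝ) / p))
      intro x
      have h3 : x * β * β⁻¹ = x := by
        rw [mul_assoc, mul_inv_cancel₀ hb, mul_one]
      simp only [Equiv.mulRight₀_apply, h3]
    have step3 : ∑ y : ZMod p, χ (y * β⁻¹) * e (((y.val : ℕ) : ℝ) / p)
        = χ β⁻¹ * ∑ y : ZMod p, χ y * e (((y.val : ℕ) : ℝ) / p) := by
      rw [Finset.mul_sum]
      refine Finset.sum_congr rfl (fun y _ => ?_)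
      rw [map_mul]
      ring
    have step4 : χ β⁻¹ = (starRingEnd ℂ) (χ β) := by
      have h1 : χ β⁻¹ * χ β = 1 := by rw [← map_mul, hβinv, map_one]
      linear_combination (-(χ β⁻¹)) * hconj + (starRingEnd ℂ) (χ β) * h1
    have step5 : ∑ y : ZMod p, χ y * e (((y.val : ℕ) : ℝ) / p)
        = ∑ s ∈ range p, χ (s : ZMod p) * e ((s : ℝ) / p) := by
      rw [← sum_range_zmod p (fun x => χ x * e (((x.val : ℕ) : ℝ) / p))]
      refine Finset.sum_congr rfl (fun s hs => ?_)
      rw [ZMod.val_cast_of_lt (mem_range.mp hs)]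
    rw [step1, step2, step3, step4, step5]

/-- Evaluation of the complete character sum modulo `pq` when `(p, q) = 1`:
`Σ_{u mod pq} χ(u) e(-au/q + mu/(pq))` equals `q τ(χ) χ(q) \bar{χ}(m)` if
`q ∣ m - ap`, and `0` otherwise. -/
theorem char_sum_coprime (p : ℕ) (hp : p.Prime) (χ : DirichletCharacter ℂ p) (hχ : χ ≠ 1)
    (q : ℕ) (hq : 0 < q) (hpq : ¬ p ∣ q) (a : ℤ) (ha : Int.gcd a q = 1) (m : ℤ) :
    (∑ u ∈ Finset.range (p * q), χ (u : ZMod p) *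
        e (-(a : ℝ) * u / q + (m : ℝ) * u / (p * q))) =
      if (q : ℤ) ∣ (m - a * p) then
        (q : ℂ) * (∑ u ∈ Finset.range p, χ (u : ZMod p) * e ((u : ℝ) / p)) *
          χ (q : ZMod p) * (starRingEnd ℂ) (χ ((m : ℤ) : ZMod p))
      else 0 := by
  haveI : Fact p.Prime := ⟨hp⟩
  haveI : NeZero p := ⟨hp.pos.ne'⟩
  have hp0 : (p : ℝ) ≠ 0 := Nat.cast_ne_zero.mpr hp.pos.ne'
  have hq0 : (q : ℝ) ≠ 0 := Nat.cast_ne_zero.mpr hq.ne'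
  set k : ℤ := m - a * p with hk
  have step1 : (∑ u ∈ Finset.range (p * q), χ (u : ZMod p) *
        e (-(a : ℝ) * u / q + (m : ℝ) * u / (p * q)))
      = ∑ x ∈ range p ×ˢ range q,
          χ ((x.1 : ZMod p)) * (e ((x.1 : ℝ) * (k : ℝ) / (p * q)) * e ((x.2 : ℝ) * (k : ℝ) / q)) := by
    refine Finset.sum_nbij' (fun u => (u % p, u / p)) (fun x => x.1 + p * x.2) ?_ ?_ ?_ ?_ ?_
    · intro u hu
      rw [mem_range] at hu
      rw [mem_product, mem_range, mem_range]
      exact ⟨Nat.mod_lt u hp.pos, Nat.div_lt_of_lt_mul hu⟩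
    · intro x hx
      rw [mem_product, mem_range, mem_range] at hx
      rw [mem_range]
      calc x.1 + p * x.2 < p + p * x.2 := by omega
        _ = p * (x.2 + 1) := by ring
        _ ≤ p * q := Nat.mul_le_mul_left p hx.2
    · intro u _; exact Nat.mod_add_div u p
    · intro x hx
      rw [mem_product, mem_range, mem_range] at hx
      have h1 : (x.1 + p * x.2) % p = x.1 := by
        rw [Nat.add_mul_mod_self_left, Nat.mod_eq_of_lt hx.1]
      have h2 : (x.1 + p * x.2) / p = x.2 := by
        rw [Nat.add_mul_div_left _ _ hp.pos, Nat.div_eq_of_lt hx.1, zero_add]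
      exact Prod.ext h1 h2
    · intro u hu
      have hmod : u % p + p * (u / p) = u := Nat.mod_add_div u p
      have hχeq : ((u : ZMod p)) = (((u % p : ℕ) : ZMod p)) := by
        conv_lhs => rw [← hmod]
        push_cast
        simp
      have harg : -(a : ℝ) * u / q + (m : ℝ) * u / (p * q)
          = ((u % p : ℕ) : ℝ) * (k : ℝ) / (p * q) + ((u / p : ℕ) : ℝ) * (k : ℝ) / q := by
        have hu' : (u : ℝ) = ((u % p : ℕ) : ℝ) + (p : ℝ) * ((u / p : ℕ) : ℝ) := by
          exact_mod_cast hmod.symm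
        rw [hu', hk]
        push_cast
        field_simp
        ring
      rw [hχeq, harg, e_add]
  rw [step1]
  have step2 : ∑ x ∈ range p ×ˢ range q,
        χ ((x.1 : ZMod p)) * (e ((x.1 : ℝ) * (k : ℝ) / (p * q)) * e ((x.2 : ℝ) * (k : ℝ) / q))
      = (∑ s ∈ range p, χ ((s : ZMod p)) * e ((s : ℝ) * (k : ℝ) / (p * q))) *
          (∑ t ∈ range q, e ((t : ℝ) * (k : ℝ) / q)) := by
    rw [Finset.sum_product, Finset.sum_mul_sum]
    refine Finset.sum_congr rfl (fun s _ => Finset.sum_congr rfl (fun t _ => by ring))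
  rw [step2, sum_e_eq q hq k]
  by_cases hdvd : (q : ℤ) ∣ k
  · rw [if_pos hdvd, if_pos hdvd]
    obtain ⟨c, hc⟩ := hdvd
    have harg : ∀ s : ℕ, (s : ℝ) * (k : ℝ) / (p * q) = (s : ℝ) * (c : ℝ) / p := by
      intro s
      have hkr : (k : ℝ) = (q : ℝ) * (c : ℝ) := by exact_mod_cast hc
      rw [hkr]
      field_simp
    rw [Finset.sum_congr rfl (fun s _ => by rw [harg s]), char_shift p hp χ hχ c]
    have hqz : ((q : ℕ) : ZMod p) ≠ 0 := by
      simpa [ZMod.natCast_eq_zero_iff] using hpq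
    have hm : (((m : ℤ) : ZMod p)) = ((q : ZMod p)) * (((c : ℤ) : ZMod p)) := by
      have hmeq : m = (q : ℤ) * c + a * p := by linarith [hc]
      rw [hmeq]
      push_cast
      simp
    have hfin : (starRingEnd ℂ) (χ (((c : ℤ) : ZMod p)))
        = χ ((q : ZMod p)) * (starRingEnd ℂ) (χ (((m : ℤ) : ZMod p))) := by
      rw [hm, map_mul, map_mul]
      have hcc := conj_char_mul p χ ((q : ZMod p)) hqz
      linear_combination (-(starRingEnd ℂ) (χ (((c : ℤ) : ZMod p)))) * hcc
    rw [hfin]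
    push_cast
    ring
  · rw [if_neg hdvd, if_neg hdvd, mul_zero]
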